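/- Let A be a profinite topological L-algebra, let B be a topological L-algebra whose underlying space is compact, Hausdorff and totally disconnected, and let φ : A → B be a surjective continuous L-homomorphism. Then B is residually finite, hence profinite. -/

import Mathlib

open FirstOrder Language Structure

/-- Residual finiteness of a topological `L`-algebra. -/
def ResiduallyFinite (L : FirstOrder.Language) (A : Type*) [TopologicalSpace A]
    [L.Structure A] : Prop :=
  ∀ a b : A, a ≠ b →
    ∃ (F : Type) (_ : Finite F) (iT : TopologicalSpace F) (iS : L.Structure F),
      letI := iT; letI := iS;
      DiscreteTopology F ∧ ∃ φ : A →[L] F, Continuous (φ : A → F) ∧ φ a ≠ φ b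

/-- Auxiliary: `Relation.EqvGen` of a relation whose single steps are respected by `funMap`
(coordinatewise in a single coordinate) is respected by `funMap`. -/
private lemma funMap_eqvGen {L : FirstOrder.Language} {A : Type*} [L.Structure A]
    (r : A → A → Prop)
    (hr : ∀ (n : ℕ) (f : L.Functions n) (x : Fin n → A) (i : Fin n) (u w : A), r u w →
      Relation.EqvGen r (funMap f (Function.update x i u)) (funMap f (Function.update x i w)))
    {n : ℕ} (f : L.Functions n) (x y : Fin n → A) (h : ∀ i, Relation.EqvGen r (x i) (y i)) :
    Relation.EqvGen r (funMap f x) (funMap f y) := by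
  have single : ∀ (z : Fin n → A) (i : Fin n) (u w : A), Relation.EqvGen r u w →
      Relation.EqvGen r (funMap f (Function.update z i u)) (funMap f (Function.update z i w)) := by
    intro z i u w h
    induction h with
    | rel a b hab => exact hr n f z i a b hab
    | refl a => exact Relation.EqvGen.refl _
    | symm a b _ ih => exact Relation.EqvGen.symm _ _ ih
    | trans a b c _ _ ih1 ih2 => exact Relation.EqvGen.trans _ _ _ ih1 ih2
  have main : ∀ k : ℕ, k ≤ n →
      Relation.EqvGen r (funMap f x) (funMap f (fun j => if (j : ℕ) < k then y j else x j)) := by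
    intro k
    induction k with
    | zero =>
        intro _
        have e : (fun j : Fin n => if (j : ℕ) < 0 then y j else x j) = x := by
          funext j; simp
        rw [e]; exact Relation.EqvGen.refl _
    | succ k ih =>
        intro hk
        have hkn : k < n := hk
        set z : Fin n → A := fun j : Fin n => if (j : ℕ) < k then y j else x j with hz
        have hzk : z ⟨k, hkn⟩ = x ⟨k, hkn⟩ := by simp [hz]
        have e : (fun j : Fin n => if (j : ℕ) < k + 1 then y j else x j)
            = Function.update z ⟨k, hkn⟩ (y ⟨k, hkn⟩) := by
          funext j
          by_cases hj : j = ⟨k, hkn⟩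
          · subst hj; simp
          · rw [Function.update_of_ne hj]
            have hjk : (j : ℕ) ≠ k := fun hh => hj (Fin.ext hh)
            simp [hz, Nat.lt_succ_iff_lt_or_eq, Nat.le_iff_lt_or_eq, hjk]
        have h1 := single z ⟨k, hkn⟩ (z ⟨k, hkn⟩) (y ⟨k, hkn⟩) (by rw [hzk]; exact h _)
        rw [Function.update_eq_self] at h1
        rw [e]
        exact Relation.EqvGen.trans _ _ _ (ih (Nat.le_of_succ_le hk)) h1
  have e : (fun j : Fin n => if (j : ℕ) < n then y j else x j) = y := by
    funext j; simp [j.isLt]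
  have := main n le_rfl
  rwa [e] at this

/-- A Stone continuous homomorphic image of a profinite algebra is profinite. -/
theorem residuallyFinite_of_surjective_continuous_hom (L : FirstOrder.Language)
    {A B : Type*}
    [TopologicalSpace A] [L.Structure A]
    [CompactSpace A] [T2Space A] [TotallyDisconnectedSpace A]
    [TopologicalSpace B] [L.Structure B]
    [CompactSpace B] [T2Space B] [TotallyDisconnectedSpace B]
    (hA : ∀ (n : ℕ) (f : L.Functions n), Continuous fun v : Fin n → A => funMap f v)
    (hB : ∀ (n : ℕ) (f : L.Functions n), Continuous fun v : Fin n → B => funMap f v)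
    (hres : ResiduallyFinite L A)
    (φ : A →[L] B) (hc : Continuous (φ : A → B)) (hs : Function.Surjective φ) :
    ResiduallyFinite L B := by
  intro b1 b2 hb
  obtain ⟨U, hU, hb1, hb2⟩ := exists_isClopen_of_totally_separated hb
  set K1 : Set A := (φ : A → B) ⁻¹' U with hK1def
  set K2 : Set A := (φ : A → B) ⁻¹' Uᶜ with hK2def
  have hneq : ∀ p : A × A, p ∈ K1 ×ˢ K2 → p.1 ≠ p.2 := by
    rintro ⟨x, y⟩ ⟨hx, hy⟩ h
    simp only at hx hy h
    subst h
    exact hy hx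
  -- choose separating homs for each pair
  have hres' : ∀ p : ↥(K1 ×ˢ K2), ∃ (F : Type) (_ : Finite F) (iT : TopologicalSpace F)
      (iS : L.Structure F) (ψ : A →[L] F),
      (@DiscreteTopology F iT) ∧ (@Continuous _ _ _ iT (ψ : A → F)) ∧
        ψ (p : A × A).1 ≠ ψ (p : A × A).2 := by
    intro p
    obtain ⟨F, fF, iT, iS, hd, ψ, hct, hne⟩ := hres (p : A × A).1 (p : A × A).2 (hneq _ p.2)
    exact ⟨F, fF, iT, iS, ψ, hd, hct, hne⟩
  choose Fp fFp topp strp ψp discp contp nep using hres'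
  -- compactness: finitely many homs separate K1 from K2
  have hK1c : IsCompact K1 := (hU.1.preimage hc).isCompact
  have hK2c : IsCompact K2 := (hU.compl.1.preimage hc).isCompact
  have Wopen : ∀ p : ↥(K1 ×ˢ K2), IsOpen {q : A × A | ψp p q.1 ≠ ψp p q.2} := by
    intro p
    letI := topp p
    haveI := discp p
    have h1 : Continuous fun q : A × A => ψp p q.1 := (contp p).comp continuous_fst
    have h2 : Continuous fun q : A × A => ψp p q.2 := (contp p).comp continuous_snd
    have hopen : IsOpen {z : Fp p × Fp p | z.1 ≠ z.2} := isOpen_discrete _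
    exact hopen.preimage (h1.prodMk h2)
  have cover : (K1 ×ˢ K2) ⊆ ⋃ p : ↥(K1 ×ˢ K2), {q : A × A | ψp p q.1 ≠ ψp p q.2} := by
    intro q hq
    exact Set.mem_iUnion.2 ⟨⟨q, hq⟩, nep ⟨q, hq⟩⟩
  obtain ⟨t, ht⟩ := (hK1c.prod hK2c).elim_finite_subcover _ Wopen cover
  -- the combined map
  set ψmap : A → (∀ p : ↥t, Fp p.1) := fun a p => ψp p.1 a with hψmap
  have opn : ∀ S : Set (∀ p : ↥t, Fp p.1), IsOpen (ψmap ⁻¹' S) := by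
    intro S
    have he : ψmap ⁻¹' S = ⋃ z ∈ S, ⋂ p : ↥t, (ψp p.1 : A → Fp p.1) ⁻¹' {z p} := by
      ext a
      simp only [Set.mem_preimage, Set.mem_iUnion, Set.mem_iInter, Set.mem_singleton_iff]
      constructor
      · intro hA2
        exact ⟨ψmap a, hA2, fun p => rfl⟩
      · rintro ⟨z, hz, hzz⟩
        have : ψmap a = z := by funext p; exact hzz p
        rwa [this]
    rw [he]
    apply isOpen_biUnion
    intro z _
    apply isOpen_iInter_of_finite
    intro p
    letI := topp p.1
    haveI := discp p.1
    exact (isOpen_discrete _).preimage (contp p.1)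
  -- the congruence
  set rel : A → A → Prop := fun x y => (φ : A → B) x = φ y ∨ ψmap x = ψmap y with hrel
  have hrstep : ∀ (n : ℕ) (f : L.Functions n) (x : Fin n → A) (i : Fin n) (u w : A),
      rel u w → Relation.EqvGen rel (funMap f (Function.update x i u))
        (funMap f (Function.update x i w)) := by
    intro n f x i u w h
    apply Relation.EqvGen.rel
    rcases h with h | h
    · left
      rw [φ.map_fun, φ.map_fun, Function.comp_update, Function.comp_update, h]
    · right
      funext p
      letI := strp p.1
      have hp : ψp p.1 u = ψp p.1 w := congrFun h p
      show ψp p.1 (funMap f (Function.update x i u)) = ψp p.1 (funMap f (Function.update x i w))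
      rw [(ψp p.1).map_fun, (ψp p.1).map_fun, Function.comp_update, Function.comp_update, hp]
  have key : ∀ {n : ℕ} (f : L.Functions n) (x y : Fin n → A), (∀ i, Relation.EqvGen rel (x i) (y i)) →
      Relation.EqvGen rel (funMap f x) (funMap f y) :=
    fun f x y h => funMap_eqvGen rel hrstep f x y h
  set s : Setoid A := Relation.EqvGen.setoid rel with hsdef
  have hsr : ∀ x y : A, (x ≈ y) = Relation.EqvGen rel x y := fun x y => rfl
  -- structure on the quotient
  letI strQ : L.Structure (Quotient s) :=
    { funMap := fun {n} f v =>
        Quotient.finLiftOn (S := fun _ : Fin n => s) v (fun x => Quotient.mk s (funMap f x))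
          (fun a b hab => Quotient.sound (key f a b hab))
      RelMap := fun {n} r v => True }
  have funMapQ : ∀ {n : ℕ} (f : L.Functions n) (x : Fin n → A),
      funMap f (fun i => Quotient.mk s (x i)) = Quotient.mk s (funMap f x) := by
    intro n f x
    show Quotient.finLiftOn (S := fun _ : Fin n => s) (fun i => Quotient.mk s (x i)) _ _ = _
    rw [show (fun i => Quotient.mk s (x i)) = fun i => (⟦x i⟧ : Quotient s) from rfl,
      Quotient.finLiftOn_mk]
  -- finiteness of the quotient
  haveI : ∀ p : ↥t, Finite (Fp p.1) := fun p => fFp p.1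
  haveI : Finite (∀ p : ↥t, Fp p.1) := Pi.finite
  have jinj : Function.Injective
      (Quotient.lift (fun a => ψmap '' {x | Relation.EqvGen rel x a})
        (fun a b hab => by
          ext w
          constructor
          · rintro ⟨x, hx, rfl⟩
            exact ⟨x, Relation.EqvGen.trans _ _ _ hx hab, rfl⟩
          · rintro ⟨x, hx, rfl⟩
            exact ⟨x, Relation.EqvGen.trans _ _ _ hx (Relation.EqvGen.symm _ _ hab), rfl⟩) :
        Quotient s → Set (∀ p : ↥t, Fp p.1)) := by
    intro q1 q2 h
    induction q1 using Quotient.ind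
    induction q2 using Quotient.ind
    rename_i a b
    simp only [Quotient.lift_mk] at h
    have ha : ψmap a ∈ ψmap '' {x | Relation.EqvGen rel x a} := ⟨a, Relation.EqvGen.refl a, rfl⟩
    rw [h] at ha
    obtain ⟨x, hx, hxa⟩ := ha
    exact Quotient.sound (Relation.EqvGen.trans _ _ _
      (Relation.EqvGen.rel _ _ (Or.inr hxa.symm)) hx)
  haveI finQ : Finite (Quotient s) := Finite.of_injective _ jinj
  -- topology on the quotient
  letI topQ : TopologicalSpace (Quotient s) := ⊥
  haveI discQ : DiscreteTopology (Quotient s) := ⟨rfl⟩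
  -- saturation: preimages of the quotient map are ψmap-saturated, hence open
  have satopen : ∀ V : Set (Quotient s), IsOpen ((Quotient.mk s) ⁻¹' V) := by
    intro V
    have he : (Quotient.mk s) ⁻¹' V = ψmap ⁻¹' (ψmap '' ((Quotient.mk s) ⁻¹' V)) := by
      apply Set.Subset.antisymm
      · exact Set.subset_preimage_image _ _
      · rintro x ⟨u, hu, huv⟩
        have : Relation.EqvGen rel x u := Relation.EqvGen.rel _ _ (Or.inr huv.symm)
        have hq : Quotient.mk s x = Quotient.mk s u := Quotient.sound this
        show Quotient.mk s x ∈ V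
        rw [hq]; exact hu
    rw [he]
    exact opn _
  -- the descended hom
  have hcφ : ∀ b : B, (φ : A → B) ((hs b).choose) = b := fun b => (hs b).choose_spec
  set c : B → A := fun b => (hs b).choose with hcdef
  have keyc : ∀ a : A, Quotient.mk s (c ((φ : A → B) a)) = Quotient.mk s a := by
    intro a
    exact Quotient.sound (Relation.EqvGen.rel _ _ (Or.inl (by rw [hcφ])))
  set χ : B →[L] Quotient s :=
    { toFun := fun b => Quotient.mk s (c b)
      map_fun' := by
        intro n f x
        have hx : funMap f x = (φ : A → B) (funMap f (fun i => c (x i))) := by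
          rw [φ.map_fun]
          congr 1
          funext i
          exact (hcφ (x i)).symm
        show Quotient.mk s (c (funMap f x)) = funMap f (fun i => Quotient.mk s (c (x i)))
        rw [funMapQ, hx, keyc]
      map_rel' := by
        intro n r x h
        trivial } with hχdef
  have hχ : ∀ b : B, χ b = Quotient.mk s (c b) := fun b => rfl
  -- continuity of χ
  have himg : ∀ V : Set (Quotient s), (χ : B → Quotient s) ⁻¹' V
      = (φ : A → B) '' ((Quotient.mk s) ⁻¹' V) := by
    intro V
    ext b
    constructor
    · intro hbv
      exact ⟨c b, hbv, hcφ b⟩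
    · rintro ⟨a, ha, rfl⟩
      show Quotient.mk s (c ((φ : A → B) a)) ∈ V
      rw [keyc]; exact ha
  have hclosed : ∀ V : Set (Quotient s), IsClosed ((χ : B → Quotient s) ⁻¹' V) := by
    intro V
    rw [himg]
    have hcl : IsClosed ((Quotient.mk s) ⁻¹' V) := by
      have : ((Quotient.mk s) ⁻¹' V)ᶜ = (Quotient.mk s) ⁻¹' Vᶜ := rfl
      exact ⟨by rw [this]; exact satopen _⟩
    exact ((hcl.isCompact).image hc).isClosed
  have hχcont : Continuous (χ : B → Quotient s) := by
    rw [continuous_def]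
    intro V _
    have : (χ : B → Quotient s) ⁻¹' V = (((χ : B → Quotient s) ⁻¹' Vᶜ))ᶜ := by
      ext b; simp
    rw [this]
    exact (hclosed Vᶜ).isOpen_compl
  -- separation
  have hc1 : c b1 ∈ K1 := by show (φ : A → B) (c b1) ∈ U; rw [hcφ]; exact hb1
  have hc2 : c b2 ∈ K2 := by show (φ : A → B) (c b2) ∈ Uᶜ; rw [hcφ]; exact hb2
  have inv : ∀ x y : A, Relation.EqvGen rel x y → ((φ : A → B) x ∈ U ↔ (φ : A → B) y ∈ U) := by
    intro x y h
    induction h with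
    | rel a b hab =>
        rcases hab with h | h
        · rw [h]
        · constructor
          · intro haU
            by_contra hbU
            have hmem : (a, b) ∈ K1 ×ˢ K2 := ⟨haU, hbU⟩
            obtain ⟨p, hp, hpab⟩ := Set.mem_iUnion₂.1 (ht hmem)
            exact hpab (congrFun h ⟨p, hp⟩)
          · intro hbU
            by_contra haU
            have hmem : (b, a) ∈ K1 ×ˢ K2 := ⟨hbU, haU⟩
            obtain ⟨p, hp, hpab⟩ := Set.mem_iUnion₂.1 (ht hmem)
            exact hpab (congrFun h.symm ⟨p, hp⟩)
    | refl a => exact Iff.rfl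
    | symm a b _ ih => exact ih.symm
    | trans a b c _ _ ih1 ih2 => exact ih1.trans ih2
  have hsep : χ b1 ≠ χ b2 := by
    intro hEq
    have hE : Relation.EqvGen rel (c b1) (c b2) := Quotient.exact hEq
    have := (inv _ _ hE).1 hc1
    exact hc2 this
  -- transport to a `Type 0` carrier
  obtain ⟨m, ⟨e⟩⟩ := Finite.exists_equiv_fin (Quotient s)
  letI strF : L.Structure (Fin m) :=
    { funMap := fun {n} f v => e (funMap f (fun i => e.symm (v i)))
      RelMap := fun {n} r v => True }
  refine ⟨Fin m, inferInstance, ⊥, strF, ⟨rfl⟩, ?_, ?_, ?_⟩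
  · exact
      { toFun := fun b => e (χ b)
        map_fun' := by
          intro n f x
          show e (χ (funMap f x)) = funMap f (fun i => e (χ (x i)))
          rw [χ.map_fun]
          show e (funMap f (fun i => χ (x i)))
            = e (funMap f (fun i => e.symm (e (χ (x i)))))
          simp
        map_rel' := by
          intro n r x h
          trivial }
  · show Continuous fun b => e (χ b)
    exact continuous_of_discreteTopology.comp hχcont
  · show e (χ b1) ≠ e (χ b2)
    exact fun h => hsep (e.injective h)
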